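/- Let G be a graph and S a zero forcing set of G with some complete forcing sequence. Then the reversal Z of S (the set of terminal vertices of all maximal forcing chains of that sequence) is also a zero forcing set of G. -/

import Mathlib

open scoped Classical

/-- The closed neighbourhood `N[S]` of a finset of vertices. -/
noncomputable def closedNbhd {V : Type*} [Fintype V] (G : SimpleGraph V) (S : Finset V) :
    Finset V :=
  S ∪ S.biUnion fun v => G.neighborFinset v

/-- One propagation step of power domination. -/
noncomputable def pdStep {V : Type*} [Fintype V] (G : SimpleGraph V) (A : Finset V) : Finset V :=
  A ∪ closedNbhd G (A.filter fun v => (G.neighborFinset v \ A).card ≤ 1)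

/-- The monitored sets `P^i(S)`, with `P^0(S) = ∅` and `P^1(S) = N[S]`. -/
noncomputable def pdSeq {V : Type*} [Fintype V] (G : SimpleGraph V) (S : Finset V) : ℕ → Finset V
  | 0 => ∅
  | 1 => closedNbhd G S
  | (i + 2) => pdStep G (pdSeq G S (i + 1))

/-- `S` is a power dominating set of `G`. -/
def IsPDS {V : Type*} [Fintype V] (G : SimpleGraph V) (S : Finset V) : Prop :=
  ∃ i, pdSeq G S i = Finset.univ

/-- The power domination number `γ_p(G)`. -/
noncomputable def pdNum {V : Type*} [Fintype V] (G : SimpleGraph V) : ℕ :=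
  sInf {k | ∃ S : Finset V, IsPDS G S ∧ S.card = k}

/-- The propagation radius `rad_p(G, S)` of a PDS `S`. -/
noncomputable def pdRadS {V : Type*} [Fintype V] (G : SimpleGraph V) (S : Finset V) : ℕ :=
  sInf {i | pdSeq G S i = Finset.univ}

/-- The propagation radius `rad_p(G)`. -/
noncomputable def pdRad {V : Type*} [Fintype V] (G : SimpleGraph V) : ℕ :=
  sInf {r | ∃ S : Finset V, IsPDS G S ∧ S.card = pdNum G ∧ pdRadS G S = r}

/-- One step of zero forcing: every monitored vertex with exactly one
unmonitored neighbour forces it. -/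
noncomputable def zfStep {V : Type*} [Fintype V] (G : SimpleGraph V) (A : Finset V) : Finset V :=
  A ∪ Finset.univ.filter fun u => ∃ v ∈ A, G.neighborFinset v \ A = {u}

/-- `S` is a zero forcing set of `G`. -/
def IsZFS {V : Type*} [Fintype V] (G : SimpleGraph V) (S : Finset V) : Prop :=
  ∃ i, (zfStep G)^[i] S = Finset.univ

/-- `(v, u)` is a valid force from the monitored set `A`: the monitored vertex `v`
has `u` as its unique unmonitored neighbour. -/
def ValidForce {V : Type*} [Fintype V] (G : SimpleGraph V) (A : Finset V) (p : V × V) : Prop :=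
  p.1 ∈ A ∧ G.neighborFinset p.1 \ A = {p.2}

/-- `T` is a complete (chronological) forcing sequence from the monitored set `A`:
each listed force is valid at its turn, and at the end all vertices are monitored. -/
def ValidSeq {V : Type*} [Fintype V] (G : SimpleGraph V) : Finset V → List (V × V) → Prop
  | A, [] => A = Finset.univ
  | A, p :: rest => ValidForce G A p ∧ ValidSeq G (insert p.2 A) rest

section Aux

variable {V : Type*} [Fintype V] (G : SimpleGraph V)

lemma zfStep_mono {A B : Finset V} (h : A ⊆ B) : zfStep G A ⊆ zfStep G B := by
  intro x hx
  rcases Finset.mem_union.1 hx with hx | hx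
  · exact Finset.mem_union_left _ (h hx)
  · obtain ⟨-, v, hvA, hnb⟩ := Finset.mem_filter.1 hx
    by_cases hxB : x ∈ B
    · exact Finset.mem_union_left _ hxB
    · refine Finset.mem_union_right _ (Finset.mem_filter.2 ⟨Finset.mem_univ _, v, h hvA, ?_⟩)
      ext y
      simp only [Finset.mem_sdiff, Finset.mem_singleton]
      constructor
      · rintro ⟨hy1, hy2⟩
        have hy : y ∈ G.neighborFinset v \ A :=
          Finset.mem_sdiff.2 ⟨hy1, fun hyA => hy2 (h hyA)⟩
        rw [hnb] at hy
        exact Finset.mem_singleton.1 hy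
      · rintro rfl
        have hx' : y ∈ G.neighborFinset v \ A := by
          rw [hnb]; exact Finset.mem_singleton_self y
        exact ⟨(Finset.mem_sdiff.1 hx').1, hxB⟩

lemma zfStep_iter_mono (n : ℕ) {A B : Finset V} (h : A ⊆ B) :
    (zfStep G)^[n] A ⊆ (zfStep G)^[n] B := by
  induction n generalizing A B with
  | zero => exact h
  | succ n ih =>
    rw [Function.iterate_succ_apply, Function.iterate_succ_apply]
    exact ih (zfStep_mono G h)

lemma insert_subset_zfStep {A : Finset V} {p : V × V} (hp : ValidForce G A p) :
    insert p.2 A ⊆ zfStep G A := by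
  intro x hx
  rcases Finset.mem_insert.1 hx with rfl | hx
  · exact Finset.mem_union_right _
      (Finset.mem_filter.2 ⟨Finset.mem_univ _, p.1, hp.1, hp.2⟩)
  · exact Finset.mem_union_left _ hx

lemma validSeq_isZFS : ∀ (A : Finset V) (L : List (V × V)), ValidSeq G A L → IsZFS G A := by
  intro A L
  induction L generalizing A with
  | nil => intro h; exact ⟨0, h⟩
  | cons p rest ih =>
    rintro ⟨hf, hr⟩
    obtain ⟨i, hi⟩ := ih _ hr
    refine ⟨i + 1, ?_⟩
    have h1 : (zfStep G)^[i] (insert p.2 A) ⊆ (zfStep G)^[i] (zfStep G A) :=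
      zfStep_iter_mono G i (insert_subset_zfStep G hf)
    rw [hi] at h1
    rw [Function.iterate_succ_apply]
    exact Finset.univ_subset_iff.1 h1

/-- A vertex whose whole neighbourhood is monitored never forces. -/
lemma no_refire : ∀ (A : Finset V) (L : List (V × V)), ValidSeq G A L →
    ∀ v, G.neighborFinset v ⊆ A → v ∉ L.map Prod.fst := by
  intro A L
  induction L generalizing A with
  | nil => intro _ v _ h; simp at h
  | cons q rest ih =>
    rintro ⟨hf, hr⟩ v hv hmem
    simp only [List.map_cons, List.mem_cons] at hmem
    rcases hmem with heq | hmem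
    · have h0 : G.neighborFinset q.1 \ A = ∅ := Finset.sdiff_eq_empty_iff_subset.2 (heq ▸ hv)
      rw [hf.2] at h0
      exact Finset.singleton_ne_empty _ h0
    · exact ih _ hr v (hv.trans (Finset.subset_insert _ _)) hmem

/-- Forced vertices are not in the starting monitored set. -/
lemma forced_not_mem : ∀ (A : Finset V) (L : List (V × V)), ValidSeq G A L →
    ∀ q ∈ L, q.2 ∉ A := by
  intro A L
  induction L generalizing A with
  | nil => intro _ q hq; simp at hq
  | cons r rest ih =>
    rintro ⟨hf, hr⟩ q hq
    rcases List.mem_cons.1 hq with rfl | hq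
    · have : q.2 ∈ G.neighborFinset q.1 \ A := by
        rw [hf.2]; exact Finset.mem_singleton_self _
      exact (Finset.mem_sdiff.1 this).2
    · intro hqA
      exact ih _ hr q hq (Finset.mem_insert_of_mem hqA)

/-- Remove a vertex `w` (untouched by `L`) from the start set and force it at the end. -/
lemma validSeq_extend (z w : V) (hzw : G.Adj z w) :
    ∀ (B : Finset V) (L : List (V × V)), ValidSeq G B L → w ∈ B →
    (∀ q ∈ L, q.1 ≠ w ∧ ¬ G.Adj q.1 w) →
    ValidSeq G (B \ {w}) (L ++ [(z, w)]) := by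
  intro B L
  induction L generalizing B with
  | nil =>
    intro hL hw _
    subst hL
    refine ⟨⟨?_, ?_⟩, ?_⟩
    · exact Finset.mem_sdiff.2 ⟨Finset.mem_univ _, by simp [hzw.ne]⟩
    · ext y
      simp only [Finset.mem_sdiff, Finset.mem_singleton, Finset.mem_univ, true_and,
        SimpleGraph.mem_neighborFinset, not_not]
      constructor
      · rintro ⟨-, rfl⟩; rfl
      · rintro rfl; exact ⟨hzw, rfl⟩
    · show insert w (Finset.univ \ {w}) = Finset.univ
      ext y
      by_cases hy : y = w <;> simp [hy]
  | cons q rest ih =>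
    rintro ⟨hf, hr⟩ hw hfor
    obtain ⟨hq1w, hqadj⟩ := hfor q List.mem_cons_self
    have hq2w : q.2 ≠ w := by
      intro h
      apply hqadj
      have : q.2 ∈ G.neighborFinset q.1 \ B := by
        rw [hf.2]; exact Finset.mem_singleton_self _
      rw [← h]
      exact (SimpleGraph.mem_neighborFinset _ _ _).1 (Finset.mem_sdiff.1 this).1
    have hwn : w ∉ G.neighborFinset q.1 := fun h =>
      hqadj ((SimpleGraph.mem_neighborFinset _ _ _).1 h)
    refine ⟨⟨Finset.mem_sdiff.2 ⟨hf.1, by simp [hq1w]⟩, ?_⟩, ?_⟩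
    · rw [← hf.2]
      ext y
      simp only [Finset.mem_sdiff, Finset.mem_singleton]
      constructor
      · rintro ⟨hy1, hy2⟩
        exact ⟨hy1, fun hyB => hy2 ⟨hyB, fun h => hwn (h ▸ hy1)⟩⟩
      · rintro ⟨hy1, hy2⟩
        exact ⟨hy1, fun h => hy2 h.1⟩
    · have heq : insert q.2 (B \ {w}) = insert q.2 B \ {w} := by
        ext y
        by_cases hy : y = q.2 <;> simp [hy, hq2w]
      rw [heq]
      exact ih _ hr (Finset.mem_insert_of_mem hw)
        (fun r hrmem => hfor r (List.mem_cons_of_mem _ hrmem))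

/-- The main reversal lemma. -/
lemma validSeq_reverse : ∀ (A : Finset V) (T : List (V × V)), ValidSeq G A T →
    ValidSeq G (Finset.univ \ (T.map Prod.fst).toFinset) ((T.map Prod.swap).reverse) := by
  intro A T
  induction T generalizing A with
  | nil => intro _; show Finset.univ \ (∅ : Finset V) = Finset.univ; simp
  | cons p rest ih =>
    rintro ⟨hf, hr⟩
    have hadj : G.Adj p.1 p.2 := by
      have : p.2 ∈ G.neighborFinset p.1 \ A := by
        rw [hf.2]; exact Finset.mem_singleton_self _
      exact (SimpleGraph.mem_neighborFinset _ _ _).1 (Finset.mem_sdiff.1 this).1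
    have hnbsub : G.neighborFinset p.1 ⊆ insert p.2 A := by
      intro x hx
      by_cases hxA : x ∈ A
      · exact Finset.mem_insert_of_mem hxA
      · have : x ∈ G.neighborFinset p.1 \ A := Finset.mem_sdiff.2 ⟨hx, hxA⟩
        rw [hf.2] at this
        exact Finset.mem_insert.2 (Or.inl (Finset.mem_singleton.1 this))
    -- `p.1` is not a forcer in `rest`
    have hp1 : p.1 ∉ (rest.map Prod.fst) := no_refire G _ _ hr p.1 hnbsub
    -- rewrite the goal
    have hset : Finset.univ \ ((p :: rest).map Prod.fst).toFinset
        = (Finset.univ \ (rest.map Prod.fst).toFinset) \ {p.1} := by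
      ext y
      simp only [List.map_cons, List.toFinset_cons, Finset.mem_sdiff, Finset.mem_insert,
        Finset.mem_singleton, Finset.mem_univ, true_and, List.mem_toFinset]
      tauto
    have hlist : ((p :: rest).map Prod.swap).reverse
        = (rest.map Prod.swap).reverse ++ [(p.2, p.1)] := by
      simp [Prod.swap]
    rw [hset, hlist]
    refine validSeq_extend G p.2 p.1 hadj.symm _ _ (ih _ hr) ?_ ?_
    · refine Finset.mem_sdiff.2 ⟨Finset.mem_univ _, ?_⟩
      rw [List.mem_toFinset]
      exact hp1
    · intro q hq
      rw [List.mem_reverse, List.mem_map] at hq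
      obtain ⟨r, hrmem, rfl⟩ := hq
      have hr2 : r.2 ∉ insert p.2 A := forced_not_mem G _ _ hr r hrmem
      constructor
      · intro h
        exact hr2 (by rw [show r.2 = p.1 from h]; exact Finset.mem_insert_of_mem hf.1)
      · intro h
        exact hr2 (hnbsub ((SimpleGraph.mem_neighborFinset _ _ _).2 h.symm))

end Aux

/-- The reversal of `S` with respect to the forcing sequence `T`: the set of terminal
vertices of the maximal forcing chains, i.e. the vertices that never force. -/
theorem stmt_6 {V : Type*} [Fintype V] (G : SimpleGraph V) (S : Finset V)
    (T : List (V × V)) (hT : ValidSeq G S T) :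
    IsZFS G (Finset.univ \ (T.map Prod.fst).toFinset) := by
  exact validSeq_isZFS G _ _ (validSeq_reverse G S T hT)
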